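/- The Altes chirplet satisfies the homogeneous self-similarity functional equation for all real orders: setting k = exp(1/(2κ)), for every real n and every ω > 0 one has ω^n·U(ω) = ω₀^n·exp(n²/(4κ))·exp(2πi·n/(2κ·log λ))·U(ω·k^{-n}). -/

import Mathlib

/-- The reparameterized Altes chirplet frequency response. -/
noncomputable def altes (κ ω₀ lam : ℝ) : ℝ → ℂ := fun ω =>
  if 0 < ω then
    Complex.exp (-(↑(κ * (Real.log (ω / ω₀)) ^ 2) : ℂ)) *
      Complex.exp (2 * Real.pi * Complex.I * Real.log ω / Real.log lam)
  else 0

/-- The Altes chirplet satisfies the homogeneous self-similarity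
functional equation for all real orders: with k = exp(1/(2κ)), for every real n
and every ω > 0,
ω^n·U(ω) = ω₀^n·exp(n²/(4κ))·exp(2πi·n/(2κ·log λ))·U(ω·k^{-n}). -/
theorem altes_self_similar (κ ω₀ lam : ℝ) (hκ : 0 < κ) (hω₀ : 0 < ω₀)
    (hlam : 0 < lam) (hlam1 : lam ≠ 1) (k : ℝ) (hk : k = Real.exp (1 / (2 * κ))) :
    ∀ n : ℝ, ∀ ω : ℝ, 0 < ω →
      (↑(ω ^ n) : ℂ) * altes κ ω₀ lam ω =
        (↑(ω₀ ^ n) : ℂ) * Complex.exp ((n ^ 2 / (4 * κ) : ℝ) : ℂ) *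
          Complex.exp (2 * Real.pi * Complex.I * n / (2 * κ * Real.log lam)) *
          altes κ ω₀ lam (ω * k ^ (-n)) := by
  intro n ω hω
  have hk0 : (0:ℝ) < k := hk ▸ Real.exp_pos _
  have hpos : 0 < ω * k ^ (-n) := mul_pos hω (Real.rpow_pos_of_pos hk0 _)
  have hlogk : Real.log k = 1 / (2*κ) := by rw [hk, Real.log_exp]
  have hL : Real.log (ω * k ^ (-n)) = Real.log ω - n / (2*κ) := by
    rw [Real.log_mul hω.ne' (Real.rpow_pos_of_pos hk0 _).ne', Real.log_rpow hk0, hlogk]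
    ring
  have hlamlog : Real.log lam ≠ 0 :=
    Real.log_ne_zero_of_pos_of_ne_one hlam hlam1
  have hκC : (κ:ℂ) ≠ 0 := Complex.ofReal_ne_zero.mpr hκ.ne'
  have hlamC : ((Real.log lam : ℝ):ℂ) ≠ 0 := Complex.ofReal_ne_zero.mpr hlamlog
  simp only [altes, if_pos hω, if_pos hpos]
  rw [Real.rpow_def_of_pos hω, Real.rpow_def_of_pos hω₀,
    Real.log_div hpos.ne' hω₀.ne', Real.log_div hω.ne' hω₀.ne', hL]
  push_cast
  simp only [← Complex.exp_add]
  congr 1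
  set a := (Real.log ω : ℂ); set b := (Real.log ω₀ : ℂ); set c := (Real.log lam : ℂ)
  field_simp
  ring
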